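/- Let M, N be unit intervals of abelian lattice-ordered groups with unit, and let s : M → N satisfy the equational axioms s(a ⊕ b) = s(a) ⊕ s(b ∧ ¬a), s(¬a) = ¬s(a), s(1) = 1. Then for all a, b ∈ M with a ⊙ b = 0 one has s(a) ⊙ s(b) = 0. -/

import Mathlib

/-- If s between unit intervals of abelian lattice-ordered groups
with unit satisfies the equational axioms (A1)-(A3), then a ⊙ b = 0 implies
s(a) ⊙ s(b) = 0. -/
theorem equational_state_preserves_odot_zero
    {G H : Type*} [Lattice G] [AddCommGroup G]
    [CovariantClass G G (· + ·) (· ≤ ·)]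
    [Lattice H] [AddCommGroup H]
    [CovariantClass H H (· + ·) (· ≤ ·)]
    (uG : G) (huG : 0 ≤ uG) (uH : H) (huH : 0 ≤ uH)
    (s : G → H)
    (hrange : ∀ a : G, 0 ≤ a → a ≤ uG → 0 ≤ s a ∧ s a ≤ uH)
    (hA1 : ∀ a b : G, 0 ≤ a → a ≤ uG → 0 ≤ b → b ≤ uG →
        s ((a + b) ⊓ uG) = (s a + s (b ⊓ (uG - a))) ⊓ uH)
    (hA2 : ∀ a : G, 0 ≤ a → a ≤ uG → s (uG - a) = uH - s a)
    (hA3 : s uG = uH) :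
    ∀ a b : G, 0 ≤ a → a ≤ uG → 0 ≤ b → b ≤ uG →
      (a + b - uG) ⊔ 0 = 0 → (s a + s b - uH) ⊔ 0 = 0 := by
  -- Monotonicity of s on the unit interval
  have mono : ∀ x y : G, 0 ≤ x → y ≤ uG → x ≤ y → s x ≤ s y := by
    intro x y hx hy hxy
    have hx1 : x ≤ uG := hxy.trans hy
    have hd0 : (0:G) ≤ y - x := sub_nonneg.2 hxy
    have hd1 : y - x ≤ uG := by
      have : y - x ≤ y := sub_le_self _ hx
      exact this.trans hy
    have key := hA1 x (y - x) hx hx1 hd0 hd1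
    have h1 : x + (y - x) = y := add_sub_cancel x y
    rw [h1, inf_eq_left.2 hy] at key
    have ht : (0:H) ≤ s ((y - x) ⊓ (uG - x)) := by
      refine (hrange _ ?_ ?_).1
      · exact le_inf hd0 (sub_nonneg.2 hx1)
      · exact (inf_le_left).trans hd1
    have hsx := hrange x hx hx1
    calc s x = (s x + 0) ⊓ uH := by rw [add_zero, inf_eq_left.2 hsx.2]
      _ ≤ (s x + s ((y - x) ⊓ (uG - x))) ⊓ uH :=
        inf_le_inf_right _ (by exact add_le_add_right ht _)
      _ = s y := key.symm
  intro a b ha ha1 hb hb1 hab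
  have hle : a + b ≤ uG := by
    have h : a + b - uG ≤ 0 := by
      rw [← hab]; exact le_sup_left
    exact sub_nonpos.1 h
  have hb' : b ≤ uG - a := le_sub_iff_add_le'.2 hle
  have hsb : s b ≤ uH - s a := by
    rw [← hA2 a ha ha1]
    exact mono b (uG - a) hb (sub_le_self _ ha) hb'
  have h2 : s a + s b - uH ≤ 0 := sub_nonpos.2 (le_sub_iff_add_le'.1 hsb)
  exact sup_eq_right.2 h2
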